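/- Let f : [-1,1] → [-1,1] be continuous with f(0) = 0. If ⟨x₁,x₂⟩ is a positive radial departure of f and ⟨x₁',x₂'⟩ is a negative radial departure of f, then either f(x₁) < f(x₂') < 0 < f(x₁') < f(x₂) or f(x₂') < f(x₁) < 0 < f(x₂) < f(x₁'). -/
import Mathlib


open Set

/-- A positive radial departure of `f`. -/
def PosRD (f : ℝ → ℝ) (x₁ x₂ : ℝ) : Prop :=
  -1 ≤ x₁ ∧ x₁ < 0 ∧ 0 < x₂ ∧ x₂ ≤ 1 ∧ f '' Ioo x₁ x₂ = Ioo (f x₁) (f x₂)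

/-- A negative radial departure of `f`. -/
def NegRD (f : ℝ → ℝ) (x₁ x₂ : ℝ) : Prop :=
  -1 ≤ x₁ ∧ x₁ < 0 ∧ 0 < x₂ ∧ x₂ ≤ 1 ∧ f '' Ioo x₁ x₂ = Ioo (f x₂) (f x₁)

/-- A radial departure of `f` (of either orientation). -/
def RadialDeparture (f : ℝ → ℝ) (x₁ x₂ : ℝ) : Prop := PosRD f x₁ x₂ ∨ NegRD f x₁ x₂

/-- A (right) departure of `g` (viewed as a map on `[0,1]`). -/
def Departure (g : ℝ → ℝ) (x : ℝ) : Prop := 0 < x ∧ x ≤ 1 ∧ g x ∉ g '' Ico 0 x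

/-- A left departure of `g` (viewed as a map on `[-1,0]`). -/
def LeftDeparture (g : ℝ → ℝ) (x : ℝ) : Prop := -1 ≤ x ∧ x < 0 ∧ g x ∉ g '' Ioc x 0

/-- A (right) contour point of `g`: a departure `α` such that every departure past `α`
is preceded (within `(α, x]`) by a departure of orientation opposite to that of `α`. -/
def ContourPoint (g : ℝ → ℝ) (α : ℝ) : Prop :=
  Departure g α ∧
    ∀ x, Departure g x → α < x → ∃ y, Departure g y ∧ α < y ∧ y ≤ x ∧ g α * g y < 0

/-- `[ym, yp]` is a liftable range for `t`. -/
def LiftableRange (t : ℝ → ℝ) (ym yp : ℝ) : Prop :=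
  -1 ≤ ym ∧ ym ≤ 0 ∧ 0 ≤ yp ∧ yp ≤ 1 ∧
  t '' Icc ym 0 ⊆ t '' Icc 0 1 ∧
  ¬ ∃ y₁ y₂, RadialDeparture t y₁ y₂ ∧ ym ≤ y₁ ∧ yp < y₂

/-- `f` is linear (affine) on the interval `[a,b]`. -/
def LinearOn (f : ℝ → ℝ) (a b : ℝ) : Prop :=
  ∀ x ∈ Icc a b, (b - a) * f x = (b - x) * f a + (x - a) * f b

/-- `f` is piecewise-linear on `[-1,1]`. -/
def PiecewiseLinear (f : ℝ → ℝ) : Prop :=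
  ∃ n : ℕ, ∃ c : ℕ → ℝ, c 0 = -1 ∧ c n = 1 ∧ (∀ i < n, c i < c (i + 1)) ∧
    ∀ i < n, LinearOn f (c i) (c (i + 1))

/-- `t` is the contour factor of `g` (for maps on `[0,1]`): the contour points of `g`
are `0 = α₀ < α₁ < ⋯ < α_n`, `t (i/n) = g (α i)`, and `t` is linear in between. -/
def IsContourFactor (g t : ℝ → ℝ) : Prop :=
  ∃ n : ℕ, 0 < n ∧ ∃ α : ℕ → ℝ, α 0 = 0 ∧ (∀ i < n, α i < α (i + 1)) ∧
    (∀ x, ContourPoint g x ↔ ∃ i, 1 ≤ i ∧ i ≤ n ∧ x = α i) ∧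
    (∀ i ≤ n, t ((i : ℝ) / (n : ℝ)) = g (α i)) ∧
    (∀ i < n, LinearOn t ((i : ℝ) / (n : ℝ)) (((i : ℝ) + 1) / (n : ℝ)))

/-- `t` is the radial contour factor of `f`: its restriction to `[0,1]` is the contour
factor of `f|[0,1]`, and `t|[-1,0] ∘ r` is the contour factor of `f|[-1,0] ∘ r`,
where `r x = -x`. -/
def IsRadialContourFactor (f t : ℝ → ℝ) : Prop :=
  IsContourFactor f t ∧ IsContourFactor (fun x => f (-x)) (fun x => t (-x))

/-- `f` is non-constant on each of `[0,1]` and `[-1,0]`. -/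
def NonConstSides (f : ℝ → ℝ) : Prop :=
  (∃ a ∈ Icc (0:ℝ) 1, ∃ b ∈ Icc (0:ℝ) 1, f a ≠ f b) ∧
  (∃ a ∈ Icc (-1:ℝ) 0, ∃ b ∈ Icc (-1:ℝ) 0, f a ≠ f b)

theorem stmt1 (f : ℝ → ℝ) (hf : Continuous f)
    (hmap : MapsTo f (Icc (-1:ℝ) 1) (Icc (-1:ℝ) 1)) (hf0 : f 0 = 0)
    (x₁ x₂ x₁' x₂' : ℝ) (hp : PosRD f x₁ x₂) (hn : NegRD f x₁' x₂') :
    (f x₁ < f x₂' ∧ f x₂' < 0 ∧ 0 < f x₁' ∧ f x₁' < f x₂) ∨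
    (f x₂' < f x₁ ∧ f x₁ < 0 ∧ 0 < f x₂ ∧ f x₂ < f x₁') := by
  obtain ⟨h1, h2, h3, h4, himg⟩ := hp
  obtain ⟨h1', h2', h3', h4', himg'⟩ := hn
  -- 0 lies in both image intervals
  have hz : (0:ℝ) ∈ Ioo (f x₁) (f x₂) := by
    rw [← himg]; exact ⟨0, ⟨h2, h3⟩, hf0⟩
  have hz' : (0:ℝ) ∈ Ioo (f x₂') (f x₁') := by
    rw [← himg']; exact ⟨0, ⟨h2', h3'⟩, hf0⟩
  have hmem : ∀ y ∈ Ioo x₁ x₂, f y ∈ Ioo (f x₁) (f x₂) := by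
    intro y hy; rw [← himg]; exact ⟨y, hy, rfl⟩
  have hmem' : ∀ y ∈ Ioo x₁' x₂', f y ∈ Ioo (f x₂') (f x₁') := by
    intro y hy; rw [← himg']; exact ⟨y, hy, rfl⟩
  have hne2 : x₂ ≠ x₂' := by
    intro h; rw [h] at hz; exact absurd hz.2 (not_lt.2 (le_of_lt hz'.1))
  have hne1 : x₁ ≠ x₁' := by
    intro h; rw [h] at hz; exact absurd hz.1 (not_lt.2 (le_of_lt hz'.2))
  rcases lt_or_gt_of_ne hne2 with h2lt | h2gt
  · -- x₂ < x₂' : f x₂ ∈ Ioo (f x₂') (f x₁')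
    have hb : f x₂ ∈ Ioo (f x₂') (f x₁') := hmem' x₂ ⟨lt_trans h2' h3, h2lt⟩
    rcases lt_or_gt_of_ne hne1 with h1lt | h1gt
    · -- x₁ < x₁' : f x₁' ∈ Ioo (f x₁) (f x₂)
      have ha : f x₁' ∈ Ioo (f x₁) (f x₂) := hmem x₁' ⟨h1lt, lt_trans h2' h3⟩
      exact absurd (lt_trans ha.2 hb.2) (lt_irrefl _)
    · -- x₁' < x₁ : f x₁ ∈ Ioo (f x₂') (f x₁')
      have ha : f x₁ ∈ Ioo (f x₂') (f x₁') := hmem' x₁ ⟨h1gt, lt_trans h2 h3'⟩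
      exact Or.inr ⟨ha.1, hz.1, hz.2, hb.2⟩
  · -- x₂' < x₂ : f x₂' ∈ Ioo (f x₁) (f x₂)
    have hb : f x₂' ∈ Ioo (f x₁) (f x₂) := hmem x₂' ⟨lt_trans h2 h3', h2gt⟩
    rcases lt_or_gt_of_ne hne1 with h1lt | h1gt
    · -- x₁ < x₁' : f x₁' ∈ Ioo (f x₁) (f x₂)
      have ha : f x₁' ∈ Ioo (f x₁) (f x₂) := hmem x₁' ⟨h1lt, lt_trans h2' h3⟩
      exact Or.inl ⟨hb.1, hz'.1, hz'.2, ha.2⟩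
    · -- x₁' < x₁ : f x₁ ∈ Ioo (f x₂') (f x₁')
      have ha : f x₁ ∈ Ioo (f x₂') (f x₁') := hmem' x₁ ⟨h1gt, lt_trans h2 h3'⟩
      exact absurd (lt_trans ha.1 hb.1) (lt_irrefl _)
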